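/- Let α ≠ β be complex numbers and let G be a function on the upper half-plane of the form G(z) = e^{2iz}(L(z)−i)/(L(z)+i), with s_γ(z) = (1/(2i))(L(z) − i − γe^{−2iz}(L(z)+i)) for γ ∈ {α, β}. If (z_n) is a sequence in H = {Im z > 0} with z_n → ∞ and |s_α(z_n)| + |s_β(z_n)| → 0, then G(z_n) is bounded and G(z_n) → α and G(z_n) → β, a contradiction; hence there is c₁ > 0 with |s_α(z)| + |s_β(z)| ≥ c₁ for all z ∈ H of sufficiently large modulus. -/

import Mathlib

open Complex

theorem stmt_14 (L : ℂ → ℂ) (α β : ℂ) (hαβ : α ≠ β)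
    (s : ℂ → ℂ → ℂ)
    (hs : ∀ γ z, s γ z = (1 / (2 * Complex.I))
        * (L z - Complex.I - γ * Complex.exp (-2 * Complex.I * z) * (L z + Complex.I))) :
    ∃ c₁ : ℝ, 0 < c₁ ∧ ∃ R : ℝ, ∀ z : ℂ, 0 < z.im → R ≤ ‖z‖ →
      c₁ ≤ ‖s α z‖ + ‖s β z‖ := by
  set M : ℝ := 1 + ‖α‖ + ‖β‖ with hM
  have hMpos : 0 < M := by positivity
  refine ⟨‖β - α‖ / M, by
    have : (0:ℝ) < ‖β - α‖ := by
      simp [sub_ne_zero.mpr (Ne.symm hαβ)]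
    positivity, 0, fun z hz _ => ?_⟩
  have key : Complex.exp (2 * Complex.I * z) * (s α z - s β z)
      + α * s β z - β * s α z = β - α := by
    simp only [hs]
    have h1 : Complex.exp (-2 * Complex.I * z) = (Complex.exp (2 * Complex.I * z))⁻¹ := by
      rw [← Complex.exp_neg]; ring_nf
    rw [h1]
    have hI : Complex.I ≠ 0 := Complex.I_ne_zero
    field_simp
    ring
  have hexp : ‖Complex.exp (2 * Complex.I * z)‖ ≤ 1 := by
    rw [Complex.norm_exp]
    have : (2 * Complex.I * z).re = -2 * z.im := by simp
    rw [this]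
    exact Real.exp_le_one_iff.mpr (by linarith)
  have habs : ‖β - α‖ ≤ M * (‖s α z‖ + ‖s β z‖) := by
    calc ‖β - α‖
        = ‖Complex.exp (2 * Complex.I * z) * (s α z - s β z)
            + α * s β z - β * s α z‖ := by rw [key]
      _ ≤ ‖Complex.exp (2 * Complex.I * z) * (s α z - s β z)‖
            + ‖α * s β z‖ + ‖β * s α z‖ := by
          refine le_trans (norm_sub_le _ _) ?_
          gcongr
          exact norm_add_le _ _
      _ ≤ 1 * (‖s α z‖ + ‖s β z‖)
            + ‖α‖ * ‖s β z‖
            + ‖β‖ * ‖s α z‖ := by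
          rw [norm_mul, norm_mul, norm_mul]
          gcongr
          exact norm_sub_le _ _
      _ ≤ M * (‖s α z‖ + ‖s β z‖) := by
          rw [hM]; nlinarith [norm_nonneg (s α z), norm_nonneg (s β z),
            norm_nonneg α, norm_nonneg β]
  rw [div_le_iff₀ hMpos] at *
  linarith [habs]
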